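/- The polynomial f = x⁴ + xy³ + y⁴ − 3x²yz − 4xy²z + 2x²z² + xz³ + yz³ + z⁴ ∈ ℚ[x,y,z] does not admit a rational SOS decomposition: there do not exist r ∈ ℕ and polynomials q₁,…,q_r ∈ ℚ[x,y,z] with f = Σ_{i=1}^r q_i². -/

import Mathlib

open MvPolynomial Finsupp

noncomputable section

/-- The cubic `t³ = 4t + 1` has no rational root. -/
lemma sch_no_rat_root (s : ℚ) : s ^ 3 ≠ 4 * s + 1 := by
  intro h
  -- clear denominators
  have hden : (s.den : ℚ) ≠ 0 := by exact_mod_cast s.den_ne_zero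
  have hnum : (s.num : ℚ) = s * (s.den : ℚ) := by
    exact ((div_eq_iff hden).mp (Rat.num_div_den s))
  have hint : (s.num : ℚ) ^ 3 = 4 * s.num * (s.den : ℚ) ^ 2 + (s.den : ℚ) ^ 3 := by
    rw [hnum]; linear_combination ((s.den : ℚ))^3 * h
  have hZ : (s.num) ^ 3 = 4 * s.num * (s.den : ℤ) ^ 2 + (s.den : ℤ) ^ 3 := by
    exact_mod_cast hint
  -- denominator divides num^3, coprime ⇒ den = 1
  have hdvd : (s.den : ℤ) ∣ s.num ^ 3 := ⟨4 * s.num * (s.den : ℤ) + (s.den : ℤ) ^ 2, by linarith [hZ]⟩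
  have hcop : Nat.Coprime s.num.natAbs s.den := s.reduced
  have hdvd' : s.den ∣ s.num.natAbs ^ 3 := by
    have := Int.natAbs_dvd_natAbs.mpr hdvd
    simpa [Int.natAbs_pow] using this
  have hden1 : s.den = 1 := Nat.Coprime.eq_one_of_dvd ((Nat.coprime_comm.mp hcop).pow_right 3) hdvd'
  -- so s is an integer n with n³ = 4n + 1
  have hZ' : s.num ^ 3 = 4 * s.num + 1 := by
    rw [hden1] at hZ; simpa using hZ
  have hunit : s.num ∣ 1 := ⟨s.num ^ 2 - 4, by linarith [hZ']⟩
  rcases Int.isUnit_iff.mp (isUnit_of_dvd_one hunit) with h1 | h1 <;> rw [h1] at hZ' <;> norm_num at hZ'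

/-- t is irrational whenever t³ = 4t + 1. -/
lemma sch_irrat {t : ℝ} (ht : t ^ 3 = 4 * t + 1) (s : ℚ) : (s : ℝ) ≠ t := by
  intro h
  apply sch_no_rat_root s
  have : (s : ℝ) ^ 3 = 4 * s + 1 := by rw [h]; exact_mod_cast ht
  exact_mod_cast this

/-- ℚ-linear independence of 1, t, t² for the cubic irrational t. -/
lemma sch_indep {t : ℝ} (ht : t ^ 3 = 4 * t + 1) (A B C : ℚ)
    (h : (A : ℝ) + B * t + C * t ^ 2 = 0) : A = 0 ∧ B = 0 ∧ C = 0 := by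
  by_cases hC : C = 0
  · subst hC
    by_cases hB : B = 0
    · subst hB
      simp only [Rat.cast_zero, zero_mul, add_zero] at h
      exact ⟨by exact_mod_cast h, rfl, rfl⟩
    · exfalso
      apply sch_irrat ht (-A / B)
      have hB' : (B : ℝ) ≠ 0 := by exact_mod_cast hB
      push_cast
      field_simp
      linear_combination -h
  · -- C ≠ 0 : derive (B²-AC-4C²) t = C² - AB
    exfalso
    have hC' : (C : ℝ) ≠ 0 := by exact_mod_cast hC
    have key : ((B ^ 2 - A * C - 4 * C ^ 2 : ℚ) : ℝ) * t = ((C ^ 2 - A * B : ℚ) : ℝ) := by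
      push_cast
      linear_combination ((B:ℝ) - (C:ℝ) * t) * h + ((C:ℝ))^2 * ht
    by_cases hα : B ^ 2 - A * C - 4 * C ^ 2 = 0
    · have hβ : C ^ 2 - A * B = 0 := by
        rw [hα] at key
        push_cast at key
        have : ((C ^ 2 - A * B : ℚ) : ℝ) = 0 := by push_cast; linarith [key]
        exact_mod_cast this
      -- then B/C is a rational root of the cubic
      apply sch_no_rat_root (B / C)
      have e1 : B ^ 2 = A * C + 4 * C ^ 2 := by linarith [hα]
      have e2 : A * B = C ^ 2 := by linarith [hβ]
      have hα0 : B ^ 2 - A * C - 4 * C ^ 2 = 0 := hα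
      have hβ0 : C ^ 2 - A * B = 0 := hβ
      have e3 : B ^ 3 = 4 * B * C ^ 2 + C ^ 3 := by
        linear_combination B * hα0 - C * hβ0
      field_simp
      linear_combination e3
    · apply sch_irrat ht ((C ^ 2 - A * B) / (B ^ 2 - A * C - 4 * C ^ 2))
      have hα' : ((B ^ 2 - A * C - 4 * C ^ 2 : ℚ) : ℝ) ≠ 0 := by exact_mod_cast hα
      push_cast
      push_cast at key
      have hα'' : (↑B ^ 2 - ↑A * ↑C - 4 * ↑C ^ 2 : ℝ) ≠ 0 := by push_cast at hα'; exact hα'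
      rw [div_eq_iff hα'']
      linarith [key]

/-- The dehomogenized-style real polynomial function. -/
def schF (a b c : ℝ) : ℝ :=
  a ^ 4 + a * b ^ 3 + b ^ 4 - 3 * a ^ 2 * b * c - 4 * a * b ^ 2 * c
    + 2 * a ^ 2 * c ^ 2 + a * c ^ 3 + b * c ^ 3 + c ^ 4

lemma sch_exists_t : ∃ t : ℝ, 2 ≤ t ∧ t ≤ 3 ∧ t ^ 3 = 4 * t + 1 := by
  have hcont : ContinuousOn (fun t : ℝ => t ^ 3 - 4 * t - 1) (Set.Icc 2 3) := by
    fun_prop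
  have h23 : (2 : ℝ) ≤ 3 := by norm_num
  have hIcc := intermediate_value_Icc h23 hcont
  have hmem : (0 : ℝ) ∈ Set.Icc ((2:ℝ) ^ 3 - 4 * 2 - 1) ((3:ℝ) ^ 3 - 4 * 3 - 1) := by
    norm_num
  obtain ⟨t, htmem, htval⟩ := hIcc hmem
  simp only at htval
  exact ⟨t, htmem.1, htmem.2, by linarith [htval]⟩

lemma sch_exists_y : ∃ y : ℝ, 1 ≤ y ∧ y ^ 6 = 4 * y ^ 2 + 1 := by
  obtain ⟨t, ht2, _, ht⟩ := sch_exists_t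
  refine ⟨Real.sqrt t, ?_, ?_⟩
  · have : (1:ℝ) ≤ Real.sqrt t := by
      rw [show (1:ℝ) = Real.sqrt 1 by simp]
      exact Real.sqrt_le_sqrt (by linarith)
    exact this
  · have ht0 : (0:ℝ) ≤ t := by linarith
    have hsq : Real.sqrt t ^ 2 = t := Real.sq_sqrt ht0
    calc Real.sqrt t ^ 6 = (Real.sqrt t ^ 2) ^ 3 := by ring
    _ = 4 * Real.sqrt t ^ 2 + 1 := by rw [hsq, ht, ← hsq]

lemma sch_y_ne {y : ℝ} (hy1 : 1 ≤ y) : y ≠ 0 := by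
  intro h; rw [h] at hy1; norm_num at hy1

/-- f vanishes at P₊ = ((y³+1)/(2y), y, 1). -/
lemma sch_zero_plus {y : ℝ} (hy1 : 1 ≤ y) (h6 : y ^ 6 = 4 * y ^ 2 + 1) : schF ((y ^ 3 + 1) / (2 * y)) y 1 = 0 := by
  have hy : y ≠ 0 := sch_y_ne hy1
  have key : 16 * y ^ 4 * schF ((y ^ 3 + 1) / (2 * y)) y 1
      = (y ^ 6 - 4 * y ^ 2 - 1) ^ 2 := by
    unfold schF
    field_simp
    ring
  have h0 : y ^ 6 - 4 * y ^ 2 - 1 = 0 := by linarith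
  rw [h0] at key
  have h16 : (0:ℝ) < 16 * y ^ 4 := by positivity
  simpa [h16.ne'] using mul_eq_zero.mp (by linarith [key] :
    (16 * y ^ 4) * schF ((y ^ 3 + 1) / (2 * y)) y 1 = 0)

/-- f vanishes at P₋ = ((y³-1)/(2y), -y, 1). -/
lemma sch_zero_minus {y : ℝ} (hy1 : 1 ≤ y) (h6 : y ^ 6 = 4 * y ^ 2 + 1) : schF ((y ^ 3 - 1) / (2 * y)) (-y) 1 = 0 := by
  have hy : y ≠ 0 := sch_y_ne hy1
  have key : 16 * y ^ 4 * schF ((y ^ 3 - 1) / (2 * y)) (-y) 1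
      = (y ^ 6 - 4 * y ^ 2 - 1) ^ 2 := by
    unfold schF
    field_simp
    ring
  have h0 : y ^ 6 - 4 * y ^ 2 - 1 = 0 := by linarith
  rw [h0] at key
  have h16 : (0:ℝ) < 16 * y ^ 4 := by positivity
  simpa [h16.ne'] using mul_eq_zero.mp (by linarith [key] :
    (16 * y ^ 4) * schF ((y ^ 3 - 1) / (2 * y)) (-y) 1 = 0)

/-- Scaling: f(s·a, s·b, s·c) = s⁴ f(a,b,c). -/
lemma schF_smul (s a b c : ℝ) : schF (s * a) (s * b) (s * c) = s ^ 4 * schF a b c := by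
  unfold schF; ring


lemma sch_sq_sum_zero {r : ℕ} (g : Fin r → MvPolynomial (Fin 3) ℚ)
    (h : ∑ i, g i ^ 2 = 0) (i : Fin r) : g i = 0 := by
  have hev : ∀ x : Fin 3 → ℚ, eval x (g i) = eval x (0 : MvPolynomial (Fin 3) ℚ) := by
    intro x
    have hx := congrArg (eval x) h
    rw [map_sum, map_zero] at hx
    simp only [map_pow] at hx
    have hnn : ∀ j ∈ Finset.univ, (0:ℚ) ≤ (eval x (g j)) ^ 2 := fun j _ => sq_nonneg _
    have := (Finset.sum_eq_zero_iff_of_nonneg hnn).mp hx i (Finset.mem_univ i)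
    simpa using pow_eq_zero_iff (n := 2) (by norm_num) |>.mp this
  exact MvPolynomial.funext hev

lemma sch_deg_le_two {r : ℕ} (q : Fin r → MvPolynomial (Fin 3) ℚ)
    {F : MvPolynomial (Fin 3) ℚ} (hF4 : F.totalDegree ≤ 4)
    (hFq : F = ∑ j, q j ^ 2) (i : Fin r) : (q i).totalDegree ≤ 2 := by
  by_contra hdeg
  push_neg at hdeg
  have hne : (Finset.univ : Finset (Fin r)).Nonempty := ⟨i, Finset.mem_univ i⟩
  obtain ⟨i₀, -, hNi₀⟩ := Finset.exists_mem_eq_sup Finset.univ hne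
    (fun j => (q j).totalDegree)
  set N := (q i₀).totalDegree with hN
  have hqj : ∀ j, (q j).totalDegree ≤ N := by
    intro j
    have h' : (q j).totalDegree ≤ Finset.univ.sup (fun j => (q j).totalDegree) :=
      Finset.le_sup (f := fun j => (q j).totalDegree) (Finset.mem_univ j)
    rw [hNi₀] at h'
    exact h'
  have hiN : 3 ≤ N := le_trans hdeg (hqj i)
  set H : Fin r → MvPolynomial (Fin 3) ℚ := fun j => homogeneousComponent N (q j) with hHdef
  set rest : Fin r → MvPolynomial (Fin 3) ℚ := fun j => q j - H j with hrest
  -- the remainder has total degree < N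
  have hrlt : ∀ j, (rest j).totalDegree < N := by
    intro j
    rw [MvPolynomial.totalDegree]
    apply (Finset.sup_lt_iff (show ⊥ < N by simp; omega)).mpr
    intro m hm
    rw [MvPolynomial.mem_support_iff] at hm
    by_contra hc
    push_neg at hc
    have hdm : Finsupp.degree m = (m.sum fun _ e => e) := rfl
    rcases eq_or_lt_of_le hc with heq | hlt
    · apply hm
      simp only [hrest, coeff_sub, hHdef, coeff_homogeneousComponent]
      rw [hdm, ← heq]
      simp
    · apply hm
      have h1 : coeff m (q j) = 0 :=
        coeff_eq_zero_of_totalDegree_lt (lt_of_le_of_lt (hqj j) hlt)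
      simp only [hrest, coeff_sub, hHdef, coeff_homogeneousComponent, hdm]
      rw [if_neg (by omega), h1]
      simp
  -- homogeneous component 2N of each square is H j ^ 2
  have hcomp : ∀ j, homogeneousComponent (2 * N) (q j ^ 2) = H j ^ 2 := by
    intro j
    have hsplit : q j ^ 2 = rest j * rest j + (rest j * H j + H j * rest j) + H j * H j := by
      simp only [hrest]; ring
    rw [hsplit, map_add, map_add, map_add]
    have hz1 : homogeneousComponent (2 * N) (rest j * rest j) = 0 := by
      apply homogeneousComponent_eq_zero
      calc (rest j * rest j).totalDegree ≤ _ := totalDegree_mul _ _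
      _ < 2 * N := by have := hrlt j; omega
    have hz2 : homogeneousComponent (2 * N) (rest j * H j) = 0 := by
      apply homogeneousComponent_eq_zero
      calc (rest j * H j).totalDegree ≤ _ := totalDegree_mul _ _
      _ < 2 * N := by
        have h1 := hrlt j
        have h2 : (H j).totalDegree ≤ N := (homogeneousComponent_isHomogeneous N (q j)).totalDegree_le
        omega
    have hz3 : homogeneousComponent (2 * N) (H j * rest j) = 0 := by
      apply homogeneousComponent_eq_zero
      calc (H j * rest j).totalDegree ≤ _ := totalDegree_mul _ _
      _ < 2 * N := by
        have h1 := hrlt j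
        have h2 : (H j).totalDegree ≤ N := (homogeneousComponent_isHomogeneous N (q j)).totalDegree_le
        omega
    have hmem : H j * H j ∈ homogeneousSubmodule (Fin 3) ℚ (N + N) := by
      rw [mem_homogeneousSubmodule]
      exact (homogeneousComponent_isHomogeneous N (q j)).mul
        (homogeneousComponent_isHomogeneous N (q j))
    have hz4 : homogeneousComponent (2 * N) (H j * H j) = H j * H j := by
      rw [homogeneousComponent_of_mem hmem, if_pos (two_mul N)]
    rw [hz1, hz2, hz3, hz4]
    ring
  -- component 2N of F is zero
  have hFcomp : homogeneousComponent (2 * N) F = 0 :=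
    homogeneousComponent_eq_zero _ F (by omega)
  have hsum : (0 : MvPolynomial (Fin 3) ℚ) = ∑ j, H j ^ 2 := by
    calc (0 : MvPolynomial (Fin 3) ℚ) = homogeneousComponent (2 * N) F := hFcomp.symm
    _ = homogeneousComponent (2 * N) (∑ j, q j ^ 2) := by rw [hFq]
    _ = ∑ j, homogeneousComponent (2 * N) (q j ^ 2) := map_sum _ _ _
    _ = ∑ j, H j ^ 2 := by simp_rw [hcomp]
  have hH0 : H i₀ = 0 := sch_sq_sum_zero H hsum.symm i₀
  -- but H i₀ ≠ 0
  have hq0 : q i₀ ≠ 0 := by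
    intro h0
    rw [hN, h0, MvPolynomial.totalDegree_zero] at hiN
    omega
  have hsupp : (q i₀).support.Nonempty := by
    rw [Finset.nonempty_iff_ne_empty]
    intro h0
    exact hq0 (MvPolynomial.support_eq_empty.mp h0)
  obtain ⟨m, hm, hms⟩ := Finset.exists_mem_eq_sup (q i₀).support hsupp
    (fun m => m.sum fun _ e => e)
  have hmN : Finsupp.degree m = N := by
    rw [hN, MvPolynomial.totalDegree, hms]
    rfl
  have : coeff m (H i₀) ≠ 0 := by
    simp only [hHdef, coeff_homogeneousComponent, hmN, if_pos rfl]
    exact MvPolynomial.mem_support_iff.mp hm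
  rw [hH0] at this
  simp at this

/-- real value of a rational coefficient -/
def qc (p : MvPolynomial (Fin 3) ℚ) (m : Fin 3 →₀ ℕ) : ℝ := ((coeff m p : ℚ) : ℝ)

lemma sch_deg3 (m : Fin 3 →₀ ℕ) : Finsupp.degree m = m 0 + m 1 + m 2 := by
  rw [Finsupp.degree_apply]
  rw [show (∑ i ∈ m.support, m i) = ∑ i : Fin 3, m i from
    Finset.sum_subset (Finset.subset_univ _)
      (fun i _ hi => Finsupp.notMem_support_iff.mp hi)]
  rw [Fin.sum_univ_three]

lemma sch_eval_homog2 (p : MvPolynomial (Fin 3) ℚ) (hp : p.IsHomogeneous 2) (w : Fin 3 → ℝ) :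
    aeval w p =
      qc p (single 0 2) * (w 0 * w 0) + qc p (single 1 2) * (w 1 * w 1)
      + qc p (single 2 2) * (w 2 * w 2)
      + qc p (single 0 1 + single 1 1) * (w 0 * w 1)
      + qc p (single 0 1 + single 2 1) * (w 0 * w 2)
      + qc p (single 1 1 + single 2 1) * (w 1 * w 2) := by
  classical
  set φ := algebraMap ℚ ℝ
  set P := map φ p with hP
  have hsupp : P.support ⊆ p.support := support_map_subset _ _
  have heval : aeval w p = eval w P := by rw [hP, eval_map]; rfl
  rw [heval, eval_eq']
  set S : Finset (Fin 3 →₀ ℕ) :=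
    {single 0 2, single 1 2, single 2 2,
     single 0 1 + single 1 1, single 0 1 + single 2 1, single 1 1 + single 2 1} with hS
  have hsub : P.support ⊆ S := by
    intro m hm
    have hm' : coeff m p ≠ 0 := by
      intro h0
      have : coeff m P = 0 := by rw [hP, coeff_map, h0]; simp
      exact MvPolynomial.mem_support_iff.mp hm this
    have hdm : Finsupp.degree m = 2 := by
      by_contra hne
      exact hm' (hp.coeff_eq_zero hne)
    rw [sch_deg3] at hdm
    have h0 : m 0 = 0 ∨ m 0 = 1 ∨ m 0 = 2 := by omega
    have h1 : m 1 = 0 ∨ m 1 = 1 ∨ m 1 = 2 := by omega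
    have h2 : m 2 = 0 ∨ m 2 = 1 ∨ m 2 = 2 := by omega
    have hm3 : m = single 0 (m 0) + single 1 (m 1) + single 2 (m 2) := by
      ext j; fin_cases j <;> simp
    rcases h0 with ha | ha | ha <;> rcases h1 with hb | hb | hb <;> rcases h2 with hc | hc | hc
    all_goals try omega
    · rw [show m = single 2 2 from by ext j; fin_cases j <;> simp [ha, hb, hc]]
      simp [hS, Finset.mem_insert]
    · rw [show m = single 1 1 + single 2 1 from by ext j; fin_cases j <;> simp [ha, hb, hc]]
      simp [hS, Finset.mem_insert]
    · rw [show m = single 1 2 from by ext j; fin_cases j <;> simp [ha, hb, hc]]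
      simp [hS, Finset.mem_insert]
    · rw [show m = single 0 1 + single 2 1 from by ext j; fin_cases j <;> simp [ha, hb, hc]]
      simp [hS, Finset.mem_insert]
    · rw [show m = single 0 1 + single 1 1 from by ext j; fin_cases j <;> simp [ha, hb, hc]]
      simp [hS, Finset.mem_insert]
    · rw [show m = single 0 2 from by ext j; fin_cases j <;> simp [ha, hb, hc]]
      simp [hS, Finset.mem_insert]
  rw [Finset.sum_subset hsub (fun x _ hx => by
    rw [MvPolynomial.notMem_support_iff.mp hx]; simp)]
  -- expand the sum over the explicit 6-element set
  have d12 : (single (0:Fin 3) 2 : Fin 3 →₀ ℕ) ≠ single 1 2 := by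
    intro h; simpa using DFunLike.congr_fun h 0
  have d13 : (single (0:Fin 3) 2 : Fin 3 →₀ ℕ) ≠ single 2 2 := by
    intro h; simpa using DFunLike.congr_fun h 0
  have d14 : (single (0:Fin 3) 2 : Fin 3 →₀ ℕ) ≠ single 0 1 + single 1 1 := by
    intro h; simpa using DFunLike.congr_fun h 0
  have d15 : (single (0:Fin 3) 2 : Fin 3 →₀ ℕ) ≠ single 0 1 + single 2 1 := by
    intro h; simpa using DFunLike.congr_fun h 0
  have d16 : (single (0:Fin 3) 2 : Fin 3 →₀ ℕ) ≠ single 1 1 + single 2 1 := by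
    intro h; simpa using DFunLike.congr_fun h 0
  have d23 : (single (1:Fin 3) 2 : Fin 3 →₀ ℕ) ≠ single 2 2 := by
    intro h; simpa using DFunLike.congr_fun h 1
  have d24 : (single (1:Fin 3) 2 : Fin 3 →₀ ℕ) ≠ single 0 1 + single 1 1 := by
    intro h; simpa using DFunLike.congr_fun h 1
  have d25 : (single (1:Fin 3) 2 : Fin 3 →₀ ℕ) ≠ single 0 1 + single 2 1 := by
    intro h; simpa using DFunLike.congr_fun h 1
  have d26 : (single (1:Fin 3) 2 : Fin 3 →₀ ℕ) ≠ single 1 1 + single 2 1 := by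
    intro h; simpa using DFunLike.congr_fun h 1
  have d34 : (single (2:Fin 3) 2 : Fin 3 →₀ ℕ) ≠ single 0 1 + single 1 1 := by
    intro h; simpa using DFunLike.congr_fun h 2
  have d35 : (single (2:Fin 3) 2 : Fin 3 →₀ ℕ) ≠ single 0 1 + single 2 1 := by
    intro h; simpa using DFunLike.congr_fun h 2
  have d36 : (single (2:Fin 3) 2 : Fin 3 →₀ ℕ) ≠ single 1 1 + single 2 1 := by
    intro h; simpa using DFunLike.congr_fun h 2
  have d45 : (single (0:Fin 3) 1 + single 1 1 : Fin 3 →₀ ℕ) ≠ single 0 1 + single 2 1 := by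
    intro h; simpa using DFunLike.congr_fun h 1
  have d46 : (single (0:Fin 3) 1 + single 1 1 : Fin 3 →₀ ℕ) ≠ single 1 1 + single 2 1 := by
    intro h; simpa using DFunLike.congr_fun h 0
  have d56 : (single (0:Fin 3) 1 + single 2 1 : Fin 3 →₀ ℕ) ≠ single 1 1 + single 2 1 := by
    intro h; simpa using DFunLike.congr_fun h 0
  have nm1 : (single (0:Fin 3) 2 : Fin 3 →₀ ℕ) ∉
      ({single 1 2, single 2 2, single 0 1 + single 1 1, single 0 1 + single 2 1,
        single 1 1 + single 2 1} : Finset (Fin 3 →₀ ℕ)) := by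
    simp only [Finset.mem_insert, Finset.mem_singleton]
    push_neg
    exact ⟨d12, d13, d14, d15, d16⟩
  have nm2 : (single (1:Fin 3) 2 : Fin 3 →₀ ℕ) ∉
      ({single 2 2, single 0 1 + single 1 1, single 0 1 + single 2 1,
        single 1 1 + single 2 1} : Finset (Fin 3 →₀ ℕ)) := by
    simp only [Finset.mem_insert, Finset.mem_singleton]
    push_neg
    exact ⟨d23, d24, d25, d26⟩
  have nm3 : (single (2:Fin 3) 2 : Fin 3 →₀ ℕ) ∉
      ({single 0 1 + single 1 1, single 0 1 + single 2 1,
        single 1 1 + single 2 1} : Finset (Fin 3 →₀ ℕ)) := by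
    simp only [Finset.mem_insert, Finset.mem_singleton]
    push_neg
    exact ⟨d34, d35, d36⟩
  have nm4 : (single (0:Fin 3) 1 + single 1 1 : Fin 3 →₀ ℕ) ∉
      ({single 0 1 + single 2 1, single 1 1 + single 2 1} : Finset (Fin 3 →₀ ℕ)) := by
    simp only [Finset.mem_insert, Finset.mem_singleton]
    push_neg
    exact ⟨d45, d46⟩
  have nm5 : (single (0:Fin 3) 1 + single 2 1 : Fin 3 →₀ ℕ) ∉
      ({single 1 1 + single 2 1} : Finset (Fin 3 →₀ ℕ)) := by
    simp only [Finset.mem_singleton]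
    exact d56
  rw [hS, Finset.sum_insert nm1, Finset.sum_insert nm2, Finset.sum_insert nm3,
    Finset.sum_insert nm4, Finset.sum_insert nm5, Finset.sum_singleton]
  have hcoeff : ∀ m : Fin 3 →₀ ℕ, coeff m P = ((coeff m p : ℚ) : ℝ) := by
    intro m; rw [hP, coeff_map]; rfl
  simp only [hcoeff, Fin.prod_univ_three]
  unfold qc
  simp [Finsupp.single_apply, pow_succ]
  ring

lemma sch_eval_homog1 (p : MvPolynomial (Fin 3) ℚ) (hp : p.IsHomogeneous 1) (w : Fin 3 → ℝ) :
    aeval w p = qc p (single 0 1) * w 0 + qc p (single 1 1) * w 1 + qc p (single 2 1) * w 2 := by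
  classical
  set φ := algebraMap ℚ ℝ
  set P := map φ p with hP
  have heval : aeval w p = eval w P := by rw [hP, eval_map]; rfl
  rw [heval, eval_eq']
  set S : Finset (Fin 3 →₀ ℕ) := {single 0 1, single 1 1, single 2 1} with hS
  have hsub : P.support ⊆ S := by
    intro m hm
    have hm' : coeff m p ≠ 0 := by
      intro h0
      have : coeff m P = 0 := by rw [hP, coeff_map, h0]; simp
      exact MvPolynomial.mem_support_iff.mp hm this
    have hdm : Finsupp.degree m = 1 := by
      by_contra hne
      exact hm' (hp.coeff_eq_zero hne)
    rw [sch_deg3] at hdm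
    have h0 : m 0 = 0 ∨ m 0 = 1 := by omega
    have h1 : m 1 = 0 ∨ m 1 = 1 := by omega
    have h2 : m 2 = 0 ∨ m 2 = 1 := by omega
    rcases h0 with ha | ha <;> rcases h1 with hb | hb <;> rcases h2 with hc | hc
    all_goals try omega
    · rw [show m = single 2 1 from by ext j; fin_cases j <;> simp [ha, hb, hc]]
      simp [hS, Finset.mem_insert]
    · rw [show m = single 1 1 from by ext j; fin_cases j <;> simp [ha, hb, hc]]
      simp [hS, Finset.mem_insert]
    · rw [show m = single 0 1 from by ext j; fin_cases j <;> simp [ha, hb, hc]]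
      simp [hS, Finset.mem_insert]
  rw [Finset.sum_subset hsub (fun x _ hx => by
    rw [MvPolynomial.notMem_support_iff.mp hx]; simp)]
  have d12 : (single (0:Fin 3) 1 : Fin 3 →₀ ℕ) ≠ single 1 1 := by
    intro h; simpa using DFunLike.congr_fun h 0
  have d13 : (single (0:Fin 3) 1 : Fin 3 →₀ ℕ) ≠ single 2 1 := by
    intro h; simpa using DFunLike.congr_fun h 0
  have d23 : (single (1:Fin 3) 1 : Fin 3 →₀ ℕ) ≠ single 2 1 := by
    intro h; simpa using DFunLike.congr_fun h 1
  have nm1 : (single (0:Fin 3) 1 : Fin 3 →₀ ℕ) ∉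
      ({single 1 1, single 2 1} : Finset (Fin 3 →₀ ℕ)) := by
    simp only [Finset.mem_insert, Finset.mem_singleton]
    push_neg
    exact ⟨d12, d13⟩
  have nm2 : (single (1:Fin 3) 1 : Fin 3 →₀ ℕ) ∉ ({single 2 1} : Finset (Fin 3 →₀ ℕ)) := by
    simp only [Finset.mem_singleton]
    exact d23
  rw [hS, Finset.sum_insert nm1, Finset.sum_insert nm2, Finset.sum_singleton]
  have hcoeff : ∀ m : Fin 3 →₀ ℕ, coeff m P = ((coeff m p : ℚ) : ℝ) := by
    intro m; rw [hP, coeff_map]; rfl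
  simp only [hcoeff, Fin.prod_univ_three]
  unfold qc
  simp [Finsupp.single_apply]
  ring

lemma sch_decomp (p : MvPolynomial (Fin 3) ℚ) (h : p.totalDegree ≤ 2) :
    p = homogeneousComponent 0 p + homogeneousComponent 1 p + homogeneousComponent 2 p := by
  have hsub : Finset.range (p.totalDegree + 1) ⊆ Finset.range 3 :=
    Finset.range_subset_range.mpr (by omega)
  have hz : ∀ i ∈ Finset.range 3, i ∉ Finset.range (p.totalDegree + 1) →
      homogeneousComponent i p = 0 := by
    intro i _ hi
    rw [Finset.mem_range] at hi
    exact homogeneousComponent_eq_zero i p (by omega)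
  have := Finset.sum_subset hsub hz
  rw [sum_homogeneousComponent] at this
  calc p = ∑ x ∈ Finset.range 3, homogeneousComponent x p := this
  _ = _ := by rw [Finset.sum_range_succ, Finset.sum_range_succ, Finset.sum_range_one]

/-- Full evaluation formula for a polynomial of total degree ≤ 2. -/
lemma sch_eval_deg2 (p : MvPolynomial (Fin 3) ℚ) (h : p.totalDegree ≤ 2) (w : Fin 3 → ℝ) :
    aeval w p = qc p 0
      + (qc p (single 0 1) * w 0 + qc p (single 1 1) * w 1 + qc p (single 2 1) * w 2)
      + (qc p (single 0 2) * (w 0 * w 0) + qc p (single 1 2) * (w 1 * w 1)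
        + qc p (single 2 2) * (w 2 * w 2)
        + qc p (single 0 1 + single 1 1) * (w 0 * w 1)
        + qc p (single 0 1 + single 2 1) * (w 0 * w 2)
        + qc p (single 1 1 + single 2 1) * (w 1 * w 2)) := by
  conv_lhs => rw [sch_decomp p h]
  rw [map_add, map_add]
  rw [homogeneousComponent_zero, aeval_C]
  rw [sch_eval_homog1 _ (homogeneousComponent_isHomogeneous 1 p) w]
  rw [sch_eval_homog2 _ (homogeneousComponent_isHomogeneous 2 p) w]
  have hqc1 : ∀ i : Fin 3, qc (homogeneousComponent 1 p) (single i 1) = qc p (single i 1) := by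
    intro i
    unfold qc
    rw [coeff_homogeneousComponent, if_pos (by rw [sch_deg3]; fin_cases i <;> simp)]
  have hqc2 : ∀ m : Fin 3 →₀ ℕ, Finsupp.degree m = 2 →
      qc (homogeneousComponent 2 p) m = qc p m := by
    intro m hm
    unfold qc
    rw [coeff_homogeneousComponent, if_pos hm]
  rw [hqc1 0, hqc1 1, hqc1 2]
  rw [hqc2 (single 0 2) (by rw [sch_deg3]; simp),
      hqc2 (single 1 2) (by rw [sch_deg3]; simp),
      hqc2 (single 2 2) (by rw [sch_deg3]; simp),
      hqc2 (single 0 1 + single 1 1) (by rw [sch_deg3]; simp),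
      hqc2 (single 0 1 + single 2 1) (by rw [sch_deg3]; simp),
      hqc2 (single 1 1 + single 2 1) (by rw [sch_deg3]; simp)]
  norm_num [qc]

lemma sch_rsq {n : ℕ} (g : Fin n → ℝ) (h : ∑ i, g i ^ 2 = 0) (i : Fin n) : g i = 0 := by
  have hnn : ∀ j ∈ Finset.univ, (0:ℝ) ≤ g j ^ 2 := fun j _ => sq_nonneg _
  have := (Finset.sum_eq_zero_iff_of_nonneg hnn).mp h i (Finset.mem_univ i)
  exact pow_eq_zero_iff (n := 2) (by norm_num) |>.mp this

theorem scheiderer_example_not_rational_sos :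
    ¬ ∃ (r : ℕ) (q : Fin r → MvPolynomial (Fin 3) ℚ),
      ((X 0) ^ 4 + (X 0) * (X 1) ^ 3 + (X 1) ^ 4 - 3 * (X 0) ^ 2 * (X 1) * (X 2)
        - 4 * (X 0) * (X 1) ^ 2 * (X 2) + 2 * (X 0) ^ 2 * (X 2) ^ 2
        + (X 0) * (X 2) ^ 3 + (X 1) * (X 2) ^ 3 + (X 2) ^ 4 : MvPolynomial (Fin 3) ℚ)
        = ∑ i, (q i) ^ 2 := by
  rintro ⟨r, q, hq⟩
  set F : MvPolynomial (Fin 3) ℚ :=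
    (X 0) ^ 4 + (X 0) * (X 1) ^ 3 + (X 1) ^ 4 - 3 * (X 0) ^ 2 * (X 1) * (X 2)
      - 4 * (X 0) * (X 1) ^ 2 * (X 2) + 2 * (X 0) ^ 2 * (X 2) ^ 2
      + (X 0) * (X 2) ^ 3 + (X 1) * (X 2) ^ 3 + (X 2) ^ 4 with hFdef
  -- F is homogeneous of degree 4
  have hC3 : ((3 : MvPolynomial (Fin 3) ℚ)).IsHomogeneous 0 := by
    rw [show (3 : MvPolynomial (Fin 3) ℚ) = C 3 from (map_ofNat C 3).symm]
    exact isHomogeneous_C _ _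
  have hC4 : ((4 : MvPolynomial (Fin 3) ℚ)).IsHomogeneous 0 := by
    rw [show (4 : MvPolynomial (Fin 3) ℚ) = C 4 from (map_ofNat C 4).symm]
    exact isHomogeneous_C _ _
  have hC2 : ((2 : MvPolynomial (Fin 3) ℚ)).IsHomogeneous 0 := by
    rw [show (2 : MvPolynomial (Fin 3) ℚ) = C 2 from (map_ofNat C 2).symm]
    exact isHomogeneous_C _ _
  have hFhom : F.IsHomogeneous 4 := by
    rw [hFdef]
    have e1 : ((X 0 : MvPolynomial (Fin 3) ℚ) ^ 4).IsHomogeneous 4 := isHomogeneous_X_pow _ _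
    have e2 : ((X 0 : MvPolynomial (Fin 3) ℚ) * X 1 ^ 3).IsHomogeneous 4 :=
      (isHomogeneous_X _ _).mul (isHomogeneous_X_pow _ _)
    have e3 : ((X 1 : MvPolynomial (Fin 3) ℚ) ^ 4).IsHomogeneous 4 := isHomogeneous_X_pow _ _
    have e4 : ((3 : MvPolynomial (Fin 3) ℚ) * X 0 ^ 2 * X 1 * X 2).IsHomogeneous 4 :=
      ((hC3.mul (isHomogeneous_X_pow _ _)).mul (isHomogeneous_X _ _)).mul (isHomogeneous_X _ _)
    have e5 : ((4 : MvPolynomial (Fin 3) ℚ) * X 0 * X 1 ^ 2 * X 2).IsHomogeneous 4 :=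
      ((hC4.mul (isHomogeneous_X _ _)).mul (isHomogeneous_X_pow _ _)).mul (isHomogeneous_X _ _)
    have e6 : ((2 : MvPolynomial (Fin 3) ℚ) * X 0 ^ 2 * X 2 ^ 2).IsHomogeneous 4 :=
      (hC2.mul (isHomogeneous_X_pow _ _)).mul (isHomogeneous_X_pow _ _)
    have e7 : ((X 0 : MvPolynomial (Fin 3) ℚ) * X 2 ^ 3).IsHomogeneous 4 :=
      (isHomogeneous_X _ _).mul (isHomogeneous_X_pow _ _)
    have e8 : ((X 1 : MvPolynomial (Fin 3) ℚ) * X 2 ^ 3).IsHomogeneous 4 :=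
      (isHomogeneous_X _ _).mul (isHomogeneous_X_pow _ _)
    have e9 : ((X 2 : MvPolynomial (Fin 3) ℚ) ^ 4).IsHomogeneous 4 := isHomogeneous_X_pow _ _
    exact ((((((((e1.add e2).add e3).sub e4).sub e5).add e6).add e7).add e8).add e9)
  have hF4 : F.totalDegree ≤ 4 := hFhom.totalDegree_le
  have htd : ∀ i, (q i).totalDegree ≤ 2 := fun i => sch_deg_le_two q hF4 hq i
  -- evaluation of F
  have hFeval : ∀ w : Fin 3 → ℝ, aeval w F = schF (w 0) (w 1) (w 2) := by
    intro w
    rw [hFdef]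
    simp only [map_add, map_sub, map_mul, map_pow, aeval_X, map_ofNat]
    unfold schF
    ring
  -- sum of squares evaluation
  have hsq : ∀ w : Fin 3 → ℝ, schF (w 0) (w 1) (w 2) = ∑ i, (aeval w (q i)) ^ 2 := by
    intro w
    rw [← hFeval w, hq, map_sum]
    simp only [map_pow]
  -- the real quadratic field data
  obtain ⟨y, hy1, h6⟩ := sch_exists_y
  have hy0 : y ≠ 0 := sch_y_ne hy1
  have ht : (y ^ 2) ^ 3 = 4 * (y ^ 2) + 1 := by linear_combination h6
  set xp : ℝ := (y ^ 3 + 1) / (2 * y) with hxp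
  set xm : ℝ := (y ^ 3 - 1) / (2 * y) with hxm
  have hxs : xp + xm = y ^ 2 := by rw [hxp, hxm]; field_simp; ring
  have hxd : y * (xp - xm) = 1 := by rw [hxp, hxm]; field_simp; ring
  have hxx : xp ^ 2 + xm ^ 2 = y ^ 4 - 2 := by
    rw [hxp, hxm]; field_simp; linear_combination (-2) * h6
  have z1 : schF xp y 1 = 0 := sch_zero_plus hy1 h6
  have z2 : schF xm (-y) 1 = 0 := sch_zero_minus hy1 h6
  -- evaluations of each q i vanish at the scaled zeros
  have hvanish : ∀ (lam a b : ℝ), schF a b 1 = 0 → ∀ i,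
      aeval (![lam * a, lam * b, lam] : Fin 3 → ℝ) (q i) = 0 := by
    intro lam a b hz i
    apply sch_rsq (fun i => aeval (![lam * a, lam * b, lam] : Fin 3 → ℝ) (q i))
    rw [← hsq]
    simp only [Matrix.cons_val_zero, Matrix.cons_val_one, Matrix.head_cons,
      Matrix.cons_val_two, Matrix.tail_cons]
    have hval : schF (lam * a) (lam * b) lam = lam ^ 4 * schF a b 1 := by
      unfold schF; ring
    rw [hval, hz, mul_zero]
  -- main per-index argument
  have key : ∀ i, aeval (![1, 0, 0] : Fin 3 → ℝ) (q i) = 0 := by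
    intro i
    set c0 := qc (q i) 0 with hc0
    set cu := qc (q i) (single 0 1) with hcu
    set cv := qc (q i) (single 1 1) with hcv
    set cs := qc (q i) (single 2 1) with hcs
    set cA := qc (q i) (single 0 2) with hcA
    set cB := qc (q i) (single 1 2) with hcB
    set cC := qc (q i) (single 2 2) with hcC
    set cD := qc (q i) (single 0 1 + single 1 1) with hcD
    set cE := qc (q i) (single 0 1 + single 2 1) with hcE
    set cF := qc (q i) (single 1 1 + single 2 1) with hcF
    -- values at scaled copies of P+
    have Ep : ∀ lam : ℝ, c0 + lam * (cu * xp + cv * y + cs)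
        + lam ^ 2 * (cA * (xp * xp) + cB * (y * y) + cC + cD * (xp * y) + cE * xp + cF * y)
        = 0 := by
      intro lam
      have hv := hvanish lam xp y z1 i
      rw [sch_eval_deg2 (q i) (htd i)] at hv
      simp only [Matrix.cons_val_zero, Matrix.cons_val_one, Matrix.head_cons,
        Matrix.cons_val_two, Matrix.tail_cons] at hv
      rw [← hc0, ← hcu, ← hcv, ← hcs, ← hcA, ← hcB, ← hcC, ← hcD, ← hcE, ← hcF] at hv
      linear_combination hv
    have Em : ∀ lam : ℝ, c0 + lam * (cu * xm - cv * y + cs)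
        + lam ^ 2 * (cA * (xm * xm) + cB * (y * y) + cC - cD * (xm * y) + cE * xm - cF * y)
        = 0 := by
      intro lam
      have hv := hvanish lam xm (-y) z2 i
      rw [sch_eval_deg2 (q i) (htd i)] at hv
      simp only [Matrix.cons_val_zero, Matrix.cons_val_one, Matrix.head_cons,
        Matrix.cons_val_two, Matrix.tail_cons] at hv
      rw [← hc0, ← hcu, ← hcv, ← hcs, ← hcA, ← hcB, ← hcC, ← hcD, ← hcE, ← hcF] at hv
      linear_combination hv
    -- solve the Vandermonde systems
    have hLp : cu * xp + cv * y + cs = 0 := by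
      have e1 := Ep 1; have e2 := Ep 2; have e3 := Ep 3
      linear_combination (-5 * e1 + 8 * e2 - 3 * e3) / 2
    have hQp : cA * (xp * xp) + cB * (y * y) + cC + cD * (xp * y) + cE * xp + cF * y = 0 := by
      have e1 := Ep 1; have e2 := Ep 2; have e3 := Ep 3
      linear_combination (e1 - 2 * e2 + e3) / 2
    have hc00 : c0 = 0 := by
      have e1 := Ep 1; have e2 := Ep 2; have e3 := Ep 3
      linear_combination 3 * e1 - 3 * e2 + e3
    have hLm : cu * xm - cv * y + cs = 0 := by
      have e1 := Em 1; have e2 := Em 2; have e3 := Em 3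
      linear_combination (-5 * e1 + 8 * e2 - 3 * e3) / 2
    have hQm : cA * (xm * xm) + cB * (y * y) + cC - cD * (xm * y) + cE * xm - cF * y = 0 := by
      have e1 := Em 1; have e2 := Em 2; have e3 := Em 3
      linear_combination (e1 - 2 * e2 + e3) / 2
    -- rationality: the coefficients are casts of rationals
    -- linear part gives cu = 0
    have hulin : ((2 * coeff (single 2 1) (q i) : ℚ) : ℝ)
        + ((coeff (single 0 1) (q i) : ℚ) : ℝ) * (y ^ 2)
        + ((0 : ℚ) : ℝ) * (y ^ 2) ^ 2 = 0 := by
      push_cast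
      have : cu * (xp + xm) + 2 * cs = 0 := by linear_combination hLp + hLm
      rw [hxs] at this
      rw [hcu, hcs] at this  -- ?
      unfold qc at this
      linear_combination this
    have hu0 : coeff (single 0 1) (q i) = 0 := by
      have := sch_indep ht (2 * coeff (single 2 1) (q i)) (coeff (single 0 1) (q i)) 0
        (by push_cast at hulin ⊢; linear_combination hulin)
      exact this.2.1
    -- quadratic part gives cA = 0
    have hqlin : ((2 * coeff (single 2 2) (q i) + coeff (single 0 1 + single 1 1) (q i)
          - 2 * coeff (single 0 2) (q i) : ℚ) : ℝ)
        + ((2 * coeff (single 1 2) (q i) + coeff (single 0 1 + single 2 1) (q i) : ℚ) : ℝ) * (y ^ 2)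
        + ((coeff (single 0 2) (q i) : ℚ) : ℝ) * (y ^ 2) ^ 2 = 0 := by
      push_cast
      have hsum2 : cA * (xp ^ 2 + xm ^ 2) + 2 * cB * (y * y) + 2 * cC
          + cD * (y * (xp - xm)) + cE * (xp + xm) = 0 := by
        linear_combination hQp + hQm
      rw [hxx, hxs, hxd] at hsum2
      rw [hcA, hcB, hcC, hcD, hcE] at hsum2
      unfold qc at hsum2
      linear_combination hsum2
    have hA0 : coeff (single 0 2) (q i) = 0 := by
      have := sch_indep ht
        (2 * coeff (single 2 2) (q i) + coeff (single 0 1 + single 1 1) (q i)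
          - 2 * coeff (single 0 2) (q i))
        (2 * coeff (single 1 2) (q i) + coeff (single 0 1 + single 2 1) (q i))
        (coeff (single 0 2) (q i))
        (by push_cast at hqlin ⊢; linear_combination hqlin)
      exact this.2.2
    -- conclude at (1,0,0)
    rw [sch_eval_deg2 (q i) (htd i)]
    simp only [Matrix.cons_val_zero, Matrix.cons_val_one, Matrix.head_cons,
      Matrix.cons_val_two, Matrix.tail_cons]
    rw [← hc0, ← hcu, ← hcv, ← hcs, ← hcA, ← hcB, ← hcC, ← hcD, ← hcE, ← hcF]
    have hcu0 : cu = 0 := by rw [hcu]; unfold qc; rw [hu0]; norm_num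
    have hcA0 : cA = 0 := by rw [hcA]; unfold qc; rw [hA0]; norm_num
    rw [hc00, hcu0, hcA0]
    ring
  -- final contradiction
  have hone : schF 1 0 0 = 1 := by unfold schF; norm_num
  have := hsq (![1, 0, 0] : Fin 3 → ℝ)
  simp only [Matrix.cons_val_zero, Matrix.cons_val_one, Matrix.head_cons,
    Matrix.cons_val_two, Matrix.tail_cons] at this
  rw [hone] at this
  rw [Finset.sum_congr rfl (fun i _ => by rw [key i])] at this
  simp at this

end
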